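/- arXiv:1011.1765 — 2 statements merged into one kernel-verified Lean document; each statement's English description precedes it below -/
import Mathlib

section
/- Let C > 0 and D ∈ ℕ. There exists k₁ ∈ ℕ \ {0} such that for every integer k ≥ k₁ and every integer j ≥ 2, setting ε_j = 1/j^k, one has C·[j(j+1)·|log ε_j|]^D · ε_j^{1 − 4/(j(j+1))} ≤ 1/(j+1)². -/
set_option maxHeartbeats 1200000 in
/-- **Numerical lemma (Lemma 3.1).** For `C > 0` and `D ∈ ℕ` there is `k₁ ∈ ℕ \ {0}` such
that for all integers `k ≥ k₁` and `j ≥ 2`, with `ε_j = 1/j^k`,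
`C·[j(j+1)|log ε_j|]^D · ε_j^(1 − 4/(j(j+1))) ≤ 1/(j+1)²`. -/
theorem numerical_lemma (C : ℝ) (hC : 0 < C) (D : ℕ) :
    ∃ k₁ : ℕ, k₁ ≠ 0 ∧ ∀ k : ℕ, k₁ ≤ k → ∀ j : ℕ, 2 ≤ j →
      C * ((j : ℝ) * ((j : ℝ) + 1) * |Real.log (1 / (j : ℝ) ^ k)|) ^ D *
          (1 / (j : ℝ) ^ k) ^ ((1 : ℝ) - 4 / ((j : ℝ) * ((j : ℝ) + 1)))
        ≤ 1 / ((j : ℝ) + 1) ^ 2 := by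
  -- Set up constants
  set r : ℝ := (2 : ℝ) ^ ((1 : ℝ) / 3) with hr_def
  have hr1 : 1 < r := by
    have h := Real.rpow_lt_rpow_of_exponent_lt (x := 2) one_lt_two
      (show (0:ℝ) < 1/3 by norm_num)
    rw [Real.rpow_zero] at h
    exact h
  set B : ℝ := (2 : ℝ) ^ (4 * D + 4) with hB_def
  have hB : 0 < B := by positivity
  set A : ℝ := C * B with hA_def
  have hA : 0 < A := by positivity
  -- find N such that A * k^D ≤ r^k for k ≥ N
  have htend := tendsto_pow_const_div_const_pow_of_one_lt D hr1
  have hev : ∀ᶠ (k : ℕ) in Filter.atTop, (k : ℝ) ^ D / r ^ k < 1 / A :=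
    htend.eventually (gt_mem_nhds (by positivity))
  obtain ⟨N, hN⟩ := Filter.eventually_atTop.mp hev
  refine ⟨max N (12 * D + 12) + 1, by positivity, ?_⟩
  intro k hk j hj
  have hkN : N ≤ k := le_trans (le_trans (le_max_left _ _) (Nat.le_succ _)) hk
  have hkD : 12 * D + 12 ≤ k := le_trans (le_trans (le_max_right _ _) (Nat.le_succ _)) hk
  set x : ℝ := (j : ℝ) with hx_def
  have hx : 2 ≤ x := by rw [hx_def]; exact_mod_cast hj
  have hx0 : (0 : ℝ) < x := by linarith
  have hx1 : (1 : ℝ) < x := by linarith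
  have hlog : 0 < Real.log x := Real.log_pos hx1
  have hxk : (0 : ℝ) < x ^ k := by positivity
  -- rewrite the absolute value of the log
  have hlog_eq : |Real.log (1 / x ^ k)| = (k : ℝ) * Real.log x := by
    rw [one_div, Real.log_inv, Real.log_pow, abs_neg, abs_of_nonneg (by positivity)]
  -- epsilon as rpow
  have heps : (1 / x ^ k : ℝ) = x ^ (-(k : ℝ)) := by
    rw [Real.rpow_neg hx0.le, Real.rpow_natCast, one_div]
  set e : ℝ := (1 : ℝ) - 4 / (x * (x + 1)) with he_def
  have hxx : (6 : ℝ) ≤ x * (x + 1) := by nlinarith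
  have he3 : (1 : ℝ) / 3 ≤ e := by
    have h4 : 4 / (x * (x + 1)) ≤ 2 / 3 := by
      rw [div_le_div_iff₀ (by linarith) (by norm_num)]; linarith
    rw [he_def]; linarith
  -- bound the rpow factor
  have hrpow_le : (1 / x ^ k : ℝ) ^ e ≤ x ^ (-((k : ℝ) / 3)) := by
    rw [heps, ← Real.rpow_mul hx0.le]
    apply Real.rpow_le_rpow_of_exponent_le hx1.le
    have hk0 : (0 : ℝ) ≤ (k : ℝ) := Nat.cast_nonneg k
    calc -(k : ℝ) * e ≤ -(k : ℝ) * (1/3) := by nlinarith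
    _ = -((k : ℝ) / 3) := by ring
  set P : ℝ := x * (x + 1) * ((k : ℝ) * Real.log x) with hP_def
  have hP0 : 0 ≤ P := by positivity
  -- P ≤ k * x^4
  have hlogx : Real.log x ≤ x := le_trans (Real.log_le_sub_one_of_pos hx0) (by linarith)
  have hx1le : x + 1 ≤ x ^ 2 := by nlinarith
  have hPle : P ≤ (k : ℝ) * x ^ 4 := by
    have hk0 : (0 : ℝ) ≤ (k : ℝ) := Nat.cast_nonneg k
    calc P = (x * (x + 1)) * ((k : ℝ) * Real.log x) := by ring
    _ ≤ (x * x ^ 2) * ((k : ℝ) * x) := by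
        apply mul_le_mul (mul_le_mul_of_nonneg_left hx1le hx0.le)
          (mul_le_mul_of_nonneg_left hlogx hk0) (by positivity) (by positivity)
    _ = (k : ℝ) * x ^ 4 := by ring
  -- main chain
  rw [hlog_eq]
  have key : C * P ^ D * (x + 1) ^ 2 ≤ x ^ ((k : ℝ) / 3) := by
    have step1 : C * P ^ D * (x + 1) ^ 2 ≤ C * ((k : ℝ) ^ D * x ^ (4 * D)) * x ^ 4 := by
      have h1 : P ^ D ≤ ((k : ℝ) * x ^ 4) ^ D := pow_le_pow_left₀ hP0 hPle D
      have h2 : ((k : ℝ) * x ^ 4) ^ D = (k : ℝ) ^ D * x ^ (4 * D) := by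
        rw [mul_pow, ← pow_mul]
      have h3 : (x + 1) ^ 2 ≤ x ^ 4 := by nlinarith
      calc C * P ^ D * (x + 1) ^ 2 ≤ C * ((k : ℝ) * x ^ 4) ^ D * x ^ 4 := by
            apply mul_le_mul (mul_le_mul_of_nonneg_left h1 hC.le) h3 (by positivity) (by positivity)
      _ = C * ((k : ℝ) ^ D * x ^ (4 * D)) * x ^ 4 := by rw [h2]
    have step2 : C * ((k : ℝ) ^ D * x ^ (4 * D)) * x ^ 4 = C * (k : ℝ) ^ D * x ^ (4 * D + 4) := by
      rw [pow_add]; ring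
    -- now show C * k^D * x^(4D+4) ≤ x^(k/3)
    set t : ℝ := (k : ℝ) / 3 - ((4 * D + 4 : ℕ) : ℝ) with ht_def
    have ht0 : 0 ≤ t := by
      have : (12 * D + 12 : ℝ) ≤ (k : ℝ) := by exact_mod_cast hkD
      rw [ht_def]; push_cast; linarith
    have hCk : C * (k : ℝ) ^ D ≤ (2 : ℝ) ^ t := by
      have hrk : (0 : ℝ) < r ^ k := pow_pos (by linarith) k
      have hAk : A * (k : ℝ) ^ D ≤ r ^ k := by
        have := hN k hkN
        rw [div_lt_div_iff₀ hrk hA] at this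
        nlinarith
      have h2t : (2 : ℝ) ^ t = r ^ k / B := by
        rw [ht_def, Real.rpow_sub (by norm_num : (0:ℝ) < 2), Real.rpow_natCast]
        congr 1
        rw [hr_def, ← Real.rpow_natCast ((2:ℝ) ^ ((1:ℝ)/3)) k, ← Real.rpow_mul (by norm_num)]
        congr 1; ring
      rw [h2t, le_div_iff₀ hB]
      calc C * (k : ℝ) ^ D * B = A * (k : ℝ) ^ D := by rw [hA_def]; ring
      _ ≤ r ^ k := hAk
    have hxt : (2 : ℝ) ^ t ≤ x ^ t := Real.rpow_le_rpow (by norm_num) hx ht0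
    have hsplit : x ^ ((k : ℝ) / 3) = x ^ t * x ^ (4 * D + 4) := by
      rw [← Real.rpow_natCast x (4 * D + 4), ← Real.rpow_add hx0, ht_def]
      congr 1; ring
    calc C * P ^ D * (x + 1) ^ 2 ≤ C * (k : ℝ) ^ D * x ^ (4 * D + 4) := by
          rw [← step2]; exact step1
    _ ≤ x ^ t * x ^ (4 * D + 4) := by
        apply mul_le_mul_of_nonneg_right (le_trans hCk hxt) (by positivity)
    _ = x ^ ((k : ℝ) / 3) := hsplit.symm
  calc C * P ^ D * (1 / x ^ k : ℝ) ^ e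
      ≤ C * P ^ D * x ^ (-((k : ℝ) / 3)) := by
        apply mul_le_mul_of_nonneg_left hrpow_le (by positivity)
  _ ≤ 1 / (x + 1) ^ 2 := by
      rw [Real.rpow_neg hx0.le, ← one_div, mul_one_div, div_le_div_iff₀ (by positivity) (by positivity)]
      simpa [one_mul] using key
end

section
/- Let B ∈ sl(2,ℝ) be a real 2×2 matrix of trace zero whose eigenvalues are purely imaginary, equal to ±iβ with β ∈ ℝ. Then for every nonzero vector φ ∈ ℝ² and every continuous function θ : [0,∞) → ℝ such that e^{tB}φ = |e^{tB}φ|·(cos θ(t), sin θ(t)) for all t ≥ 0, the limit lim_{t→+∞} θ(t)/t exists and its absolute value equals |β|. -/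
open Complex Filter Set Real
open scoped Matrix.Norms.L2Operator

private lemma intcst {T : ℝ} {f : ℝ → ℝ} (hf : ContinuousOn f (Ici T))
    (hint : ∀ t ∈ Ici T, ∃ n : ℤ, f t = 2 * π * n) {t : ℝ} (ht : T ≤ t) : f t = f T := by
  obtain ⟨n, hn⟩ := hint t (mem_Ici.2 ht)
  obtain ⟨m, hm⟩ := hint T self_mem_Ici
  by_contra hne
  have hπ := Real.pi_pos
  have hmn : m ≠ n := by rintro rfl; exact hne (hn.trans hm.symm)
  have hcont : ContinuousOn f (uIcc T t) := hf.mono (by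
    rw [uIcc_of_le ht]; exact Icc_subset_Ici_self)
  have hmem : 2 * π * (min m n) + π ∈ uIcc (f T) (f t) := by
    rcases le_or_gt m n with h | h
    · have h1 : (m : ℝ) ≤ n := by exact_mod_cast h
      rw [hm, hn]
      have hm' : (min m n : ℤ) = m := min_eq_left h
      constructor
      · rw [inf_le_iff]; left
        rw [hm']; nlinarith
      · rw [le_sup_iff]; right
        have : (m : ℝ) + 1 ≤ n := by exact_mod_cast (by omega : m + 1 ≤ n)
        rw [hm']; nlinarith
    · have h1 : (n : ℝ) + 1 ≤ m := by exact_mod_cast (by omega : n + 1 ≤ m)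
      rw [hm, hn]
      have hm' : (min m n : ℤ) = n := min_eq_right h.le
      constructor
      · rw [inf_le_iff]; right; rw [hm']; nlinarith
      · rw [le_sup_iff]; left; rw [hm']; nlinarith
  obtain ⟨s, hs, hfs⟩ := intermediate_value_uIcc hcont hmem
  have hsI : s ∈ Ici T := by
    rw [uIcc_of_le ht] at hs; exact mem_Ici.2 hs.1
  obtain ⟨k, hk⟩ := hint s hsI
  rw [hk] at hfs
  have : (2 * k : ℝ) = 2 * (min m n) + 1 := by
    have h2 : 2 * π * k = 2 * π * (min m n) + π := hfs
    field_simp at h2 ⊢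
    nlinarith
  have : (2 * k : ℤ) = 2 * (min m n) + 1 := by exact_mod_cast this
  omega

private lemma bdd_div_tendsto {T M : ℝ} {u : ℝ → ℝ} (hu : ∀ t ∈ Ici T, |u t| ≤ M) :
    Tendsto (fun t => u t / t) atTop (nhds 0) := by
  have h1 : ∀ᶠ t in atTop, ‖u t / t‖ ≤ M / t := by
    filter_upwards [eventually_ge_atTop (max T 1)] with t ht
    have ht1 : (1:ℝ) ≤ t := le_trans (le_max_right _ _) ht
    have htT : T ≤ t := le_trans (le_max_left _ _) ht
    rw [norm_div, Real.norm_eq_abs, Real.norm_eq_abs, abs_of_pos (by linarith : (0:ℝ) < t)]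
    gcongr
    exact hu t htT
  exact squeeze_zero_norm' h1 (tendsto_const_nhds.div_atTop tendsto_id)

private lemma key {T ω : ℝ} {a : ℂ} (ha : a ≠ 0) {h : ℝ → ℂ}
    (hh : ContinuousOn h (Ici T)) (hre : ∀ t ∈ Ici T, 0 < (h t).re)
    {θ : ℝ → ℝ} (hθ : ContinuousOn θ (Ici T))
    (heq : ∀ t ∈ Ici T, Complex.exp ((θ t : ℂ) * I) =
      a * Complex.exp ((ω : ℂ) * t * I) * h t /
        (‖a * Complex.exp ((ω : ℂ) * t * I) * h t‖ : ℝ)) :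
    Tendsto (fun t => θ t / t) atTop (nhds ω) := by
  set θh : ℝ → ℝ := fun t => ω * t + a.arg + (h t).arg with hθh_def
  have hne : ∀ t ∈ Ici T, h t ≠ 0 := by
    intro t ht h0
    have := hre t ht
    rw [h0] at this; simp at this
  have habs : ∀ t : ℝ, ‖a * Complex.exp ((ω:ℂ) * t * I) * h t‖ =
      ‖a‖ * ‖h t‖ := by
    intro t
    rw [norm_mul, norm_mul]
    rw [show ((ω:ℂ) * t) = ((ω * t : ℝ) : ℂ) by push_cast; ring, Complex.norm_exp_ofReal_mul_I]
    ring
  have hexp : ∀ t ∈ Ici T, Complex.exp ((θh t : ℂ) * I) =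
      a * Complex.exp ((ω:ℂ) * t * I) * h t /
        (‖a * Complex.exp ((ω:ℂ) * t * I) * h t‖ : ℝ) := by
    intro t ht
    have hne' := hne t ht
    have habsa : ‖a‖ ≠ 0 := norm_ne_zero_iff.mpr ha
    have habsh : ‖h t‖ ≠ 0 := norm_ne_zero_iff.mpr hne'
    rw [habs, eq_div_iff (by exact_mod_cast mul_ne_zero habsa habsh)]
    conv_rhs => rw [← Complex.norm_mul_exp_arg_mul_I a, ← Complex.norm_mul_exp_arg_mul_I (h t)]
    rw [show ((θh t : ℝ) : ℂ) * I = ((ω*t:ℝ):ℂ)*I + ((a.arg:ℝ):ℂ)*I + (((h t).arg:ℝ):ℂ)*I by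
      simp only [hθh_def]; push_cast; ring, Complex.exp_add, Complex.exp_add]
    push_cast
    ring
  have hdiff : ∀ t ∈ Ici T, ∃ n : ℤ, θ t - θh t = 2 * π * n := by
    intro t ht
    have h1 := (heq t ht).trans (hexp t ht).symm
    rw [Complex.exp_eq_exp_iff_exists_int] at h1
    obtain ⟨n, hn⟩ := h1
    refine ⟨n, ?_⟩
    have h2 := congrArg Complex.im hn
    simp at h2
    linarith
  have hθhc : ContinuousOn θh (Ici T) := by
    refine ContinuousOn.add (ContinuousOn.add ?_ continuousOn_const) ?_
    · exact (continuous_const.mul continuous_id).continuousOn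
    · intro t ht
      exact (Complex.continuousAt_arg (Complex.mem_slitPlane_iff.2 (Or.inl (hre t ht)))).comp_continuousWithinAt
        (hh t ht)
  have hconst : ∀ t ∈ Ici T, θ t - θh t = θ T - θh T :=
    fun t ht => intcst (hθ.sub hθhc) hdiff ht
  set c := θ T - θh T with hc
  have hbound : ∀ t ∈ Ici T, |a.arg + (h t).arg + c| ≤ |a.arg| + π + |c| := by
    intro t ht
    have h1 := Complex.abs_arg_le_pi (h t)
    calc |a.arg + (h t).arg + c| ≤ |a.arg + (h t).arg| + |c| := abs_add_le _ _
      _ ≤ |a.arg| + |(h t).arg| + |c| := by linarith [abs_add_le a.arg (h t).arg]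
      _ ≤ |a.arg| + π + |c| := by linarith
  have hlim := bdd_div_tendsto hbound
  have h2 : Tendsto (fun t => ω + (a.arg + (h t).arg + c)/t) atTop (nhds ω) := by
    simpa using tendsto_const_nhds.add hlim
  apply h2.congr'
  filter_upwards [eventually_ge_atTop (max T 1)] with t ht
  have htT : T ≤ t := le_trans (le_max_left _ _) ht
  have ht1 : (1:ℝ) ≤ t := le_trans (le_max_right _ _) ht
  have ht0 : t ≠ 0 := by linarith
  have hval : θ t = ω * t + (a.arg + (h t).arg + c) := by
    have := hconst t htT
    simp only [hθh_def] at this ⊢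
    linarith
  rw [hval]
  field_simp

private lemma CH {B : Matrix (Fin 2) (Fin 2) ℝ} {β : ℝ} (htr : B.trace = 0)
    (hdet : B.det = β ^ 2) : B * B = (-(β^2)) • (1 : Matrix (Fin 2) (Fin 2) ℝ) := by
  have hd : B 1 1 = -(B 0 0) := by
    simp [Matrix.trace, Fin.sum_univ_two, Matrix.diag] at htr; linarith
  rw [Matrix.det_fin_two, hd] at hdet
  ext i j
  fin_cases i <;> fin_cases j <;>
    simp [Matrix.mul_apply, Fin.sum_univ_two, Matrix.one_apply, hd] <;> nlinarith [hdet]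

private lemma exp_nilpotent {A : Matrix (Fin 2) (Fin 2) ℝ} (h2 : A * A = 0) :
    NormedSpace.exp A = 1 + A := by
  rw [NormedSpace.exp_eq_tsum ℝ]
  dsimp only
  have hzero : ∀ n ∉ ({0, 1} : Finset ℕ), ((n.factorial : ℝ))⁻¹ • A ^ n = 0 := by
    intro n hn
    simp only [Finset.mem_insert, Finset.mem_singleton] at hn
    obtain ⟨m, rfl⟩ : ∃ m, n = 2 + m := ⟨n - 2, by omega⟩
    rw [pow_add, pow_two, h2, zero_mul, smul_zero]
  rw [tsum_eq_sum hzero]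
  simp [Finset.sum_pair (by norm_num : (0:ℕ) ≠ 1)]

private lemma exp_elliptic {B : Matrix (Fin 2) (Fin 2) ℝ} {β : ℝ} (hβ : β ≠ 0)
    (h2 : B * B = (-(β^2)) • (1 : Matrix (Fin 2) (Fin 2) ℝ)) (t : ℝ) :
    NormedSpace.exp (t • B) =
      Real.cos (β * t) • (1 : Matrix (Fin 2) (Fin 2) ℝ) + (Real.sin (β * t) / β) • B := by
  set J : Matrix (Fin 2) (Fin 2) ℝ := β⁻¹ • B with hJ
  have hJ2 : J * J = -1 := by
    rw [hJ, Matrix.smul_mul, Matrix.mul_smul, h2, smul_smul, smul_smul]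
    rw [show β⁻¹ * β⁻¹ * -β^2 = -1 by field_simp]
    simp
  set f : ℂ →ₐ[ℝ] Matrix (Fin 2) (Fin 2) ℝ := Complex.liftAux J hJ2 with hf
  have hfc : Continuous f := f.toLinearMap.continuous_of_finiteDimensional
  have harg : f (((β * t : ℝ) : ℂ) * Complex.I) = t • B := by
    rw [Complex.liftAux_apply]
    simp [hJ, smul_smul]
    rw [show β * t * β⁻¹ = t by field_simp]
  calc NormedSpace.exp (t • B) = NormedSpace.exp (f (((β * t : ℝ) : ℂ) * Complex.I)) := by
        rw [harg]
    _ = f (NormedSpace.exp (((β * t : ℝ) : ℂ) * Complex.I)) := (NormedSpace.map_exp f hfc _).symm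
    _ = _ := by
        rw [← Complex.exp_eq_exp_ℂ]
        have hcs : Complex.exp (((β*t:ℝ):ℂ) * Complex.I)
            = ((Real.cos (β*t) : ℝ) : ℂ) + ((Real.sin (β*t) : ℝ) : ℂ) * Complex.I := by
          rw [Complex.exp_mul_I, Complex.ofReal_cos, Complex.ofReal_sin]
        rw [hcs, Complex.liftAux_apply]
        have hre : (((Real.cos (β*t) : ℝ) : ℂ) + ((Real.sin (β*t) : ℝ) : ℂ) * Complex.I).re
            = Real.cos (β*t) := by
          simp only [Complex.add_re, Complex.ofReal_re, Complex.mul_I_re, Complex.ofReal_im]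
          ring
        have him : (((Real.cos (β*t) : ℝ) : ℂ) + ((Real.sin (β*t) : ℝ) : ℂ) * Complex.I).im
            = Real.sin (β*t) := by
          simp only [Complex.add_im, Complex.ofReal_im, Complex.mul_I_im, Complex.ofReal_re]
          ring
        rw [hre, him, hJ, smul_smul, Algebra.algebraMap_eq_smul_one]
        rw [show Real.sin (β*t) * β⁻¹ = Real.sin (β*t)/β by ring]

private lemma mulVec_ne_zero {M : Matrix (Fin 2) (Fin 2) ℝ} (hM : IsUnit M)
    {φ : Fin 2 → ℝ} (hφ : φ ≠ 0) : M.mulVec φ ≠ 0 := by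
  intro h0
  obtain ⟨u, rfl⟩ := hM
  apply hφ
  have h1 := congrArg (fun w => (↑u⁻¹ : Matrix (Fin 2) (Fin 2) ℝ).mulVec w) h0
  simpa only [Matrix.mulVec_mulVec, Units.inv_mul, Matrix.one_mulVec, Matrix.mulVec_zero] using h1

private lemma exp_arg_eq {v : Fin 2 → ℝ} (hv : v ≠ 0) {θ : ℝ}
    (h : v = Real.sqrt (v 0 ^ 2 + v 1 ^ 2) • ![Real.cos θ, Real.sin θ]) :
    Complex.exp ((θ : ℂ) * Complex.I) =
      ((v 0 : ℂ) + v 1 * Complex.I) / (‖(v 0 : ℂ) + v 1 * Complex.I‖ : ℂ) := by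
  set r := Real.sqrt (v 0 ^ 2 + v 1 ^ 2) with hr_def
  set z : ℂ := (v 0 : ℂ) + v 1 * Complex.I with hz_def
  have hz : z ≠ 0 := by
    intro h0
    apply hv
    have hre : v 0 = 0 := by
      have := congrArg Complex.re h0; simpa [hz_def] using this
    have him : v 1 = 0 := by
      have := congrArg Complex.im h0; simpa [hz_def] using this
    funext i; fin_cases i <;> simpa
  have habs : ‖z‖ = r := by
    rw [hz_def, hr_def]
    rw [Complex.norm_def, Complex.normSq_apply]
    congr 1
    simp
    ring
  have hr : 0 < r := habs ▸ norm_pos_iff.mpr hz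
  have h0 : v 0 = r * Real.cos θ := by
    have := congrFun h 0; simpa using this
  have h1 : v 1 = r * Real.sin θ := by
    have := congrFun h 1; simpa using this
  have hzr : z = (r : ℂ) * Complex.exp ((θ : ℂ) * Complex.I) := by
    rw [Complex.exp_mul_I, ← Complex.ofReal_cos, ← Complex.ofReal_sin, hz_def, h0, h1]
    push_cast
    ring
  rw [habs, hzr, mul_div_cancel_left₀]
  exact_mod_cast hr.ne'

/-- **Rotation number of a constant `sl(2,ℝ)` cocycle.** If `B` is a real `2×2`
trace-zero matrix with purely imaginary eigenvalues `±iβ` (equivalently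
`det B = β²`), then for any nonzero `φ ∈ ℝ²` and any continuous lift `θ` of the
polar angle of `t ↦ e^{tB}φ`, the limit `lim_{t→∞} θ(t)/t` exists and has
absolute value `|β|`. -/
theorem rotation_number_constant_cocycle
    (B : Matrix (Fin 2) (Fin 2) ℝ) (β : ℝ)
    (htr : B.trace = 0) (hdet : B.det = β ^ 2)
    (φ : Fin 2 → ℝ) (hφ : φ ≠ 0) (θ : ℝ → ℝ)
    (hθcont : ContinuousOn θ (Set.Ici (0 : ℝ)))
    (hlift : ∀ t : ℝ, 0 ≤ t →
      (NormedSpace.exp (t • B)).mulVec φ =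
        Real.sqrt (((NormedSpace.exp (t • B)).mulVec φ 0) ^ 2 +
            ((NormedSpace.exp (t • B)).mulVec φ 1) ^ 2)
          • ![Real.cos (θ t), Real.sin (θ t)]) :
    ∃ ρ : ℝ, Filter.Tendsto (fun t => θ t / t) Filter.atTop (nhds ρ) ∧ |ρ| = |β| := by
  have hβJ := CH htr hdet
  set ψ : Fin 2 → ℝ := B.mulVec φ with hψ
  set zφ : ℂ := (φ 0 : ℂ) + φ 1 * Complex.I with hzφ
  set zψ : ℂ := (ψ 0 : ℂ) + ψ 1 * Complex.I with hzψ
  set v : ℝ → Fin 2 → ℝ := fun t => (NormedSpace.exp (t • B)).mulVec φ with hv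
  set z : ℝ → ℂ := fun t => (v t 0 : ℂ) + v t 1 * Complex.I with hz
  have hvne : ∀ t, v t ≠ 0 := fun t => mulVec_ne_zero (Matrix.isUnit_exp _) hφ
  have hzne : ∀ t, z t ≠ 0 := by
    intro t h0
    apply hvne t
    have hre : v t 0 = 0 := by have := congrArg Complex.re h0; simpa [hz] using this
    have him : v t 1 = 0 := by have := congrArg Complex.im h0; simpa [hz] using this
    funext i; fin_cases i <;> simpa
  have hzφne : zφ ≠ 0 := by
    intro h0
    apply hφ
    have hre : φ 0 = 0 := by have := congrArg Complex.re h0; simpa [hzφ] using this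
    have him : φ 1 = 0 := by have := congrArg Complex.im h0; simpa [hzφ] using this
    funext i; fin_cases i <;> simpa
  have hθz : ∀ t ∈ Ici (0:ℝ), Complex.exp ((θ t : ℂ) * Complex.I)
      = z t / (‖z t‖ : ℂ) := by
    intro t ht
    exact exp_arg_eq (hvne t) (hlift t ht)
  rcases eq_or_ne β 0 with hβ0 | hβ0
  · -- parabolic / nilpotent case
    subst hβ0
    have hBB : B * B = 0 := by simpa using hβJ
    have hexp : ∀ t : ℝ, NormedSpace.exp (t • B) = 1 + t • B := by
      intro t
      apply exp_nilpotent
      rw [Matrix.smul_mul, Matrix.mul_smul, hBB, smul_zero, smul_zero]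
    have hzt : ∀ t : ℝ, z t = zφ + (t : ℂ) * zψ := by
      intro t
      have hvt : v t = φ + t • ψ := by
        show (NormedSpace.exp (t • B)).mulVec φ = _
        rw [hexp t, Matrix.add_mulVec, Matrix.one_mulVec, Matrix.smul_mulVec]
      show ((v t 0 : ℂ) + v t 1 * Complex.I) = _
      rw [hvt]
      simp only [Pi.add_apply, Pi.smul_apply, smul_eq_mul, hzφ, hzψ]
      push_cast
      ring
    rcases eq_or_ne zψ 0 with hψ0 | hψ0
    · refine ⟨0, ?_, by simp⟩
      apply key (T := 0) (ω := 0) hzφne (h := fun _ => (1:ℂ)) continuousOn_const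
        (by intro t ht; norm_num) hθcont
      intro t ht
      have h1 : zφ * Complex.exp (((0:ℝ):ℂ) * t * Complex.I) * 1 = z t := by
        simp [hzt t, hψ0]
      have h2 := hθz t ht
      rw [← h1] at h2
      exact h2
    · set w : ℂ := zφ / zψ with hw
      refine ⟨0, ?_, by simp⟩
      have hT0 : (0:ℝ) ≤ ‖w‖ + 1 := by positivity
      apply key (T := ‖w‖ + 1) (ω := 0) hψ0 (h := fun t => (t:ℂ) + w)
        ((Complex.continuous_ofReal.add continuous_const).continuousOn)
        ?_ (hθcont.mono (Ici_subset_Ici.2 hT0))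
      · intro t ht
        have h1 : zψ * Complex.exp (((0:ℝ):ℂ) * t * Complex.I) * ((t:ℂ) + w) = z t := by
          rw [hzt t, hw]
          have : zψ * ((t:ℂ) + zφ/zψ) = zψ * t + zφ := by
            rw [mul_add, mul_div_cancel₀ _ hψ0]
          simp only [Complex.ofReal_zero, zero_mul, Complex.exp_zero, mul_one]
          rw [this]; ring
        have h2 := hθz t (le_trans hT0 ht)
        rw [← h1] at h2
        exact h2
      · intro t ht
        have hre1 : ((t:ℂ) + w).re = t + w.re := by simp
        have h3 : |w.re| ≤ ‖w‖ := Complex.abs_re_le_norm w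
        have ht' : ‖w‖ + 1 ≤ t := ht
        show 0 < ((t:ℂ) + w).re
        rw [hre1]
        have := neg_abs_le w.re
        linarith
  · -- elliptic case
    have hexp := exp_elliptic hβ0 hβJ
    have hβC : (β:ℂ) ≠ 0 := Complex.ofReal_ne_zero.2 hβ0
    have hzt : ∀ t : ℝ, z t = (Real.cos (β*t) : ℂ) * zφ
        + ((Real.sin (β*t)/β : ℝ) : ℂ) * zψ := by
      intro t
      have hvt : v t = Real.cos (β*t) • φ + (Real.sin (β*t)/β) • ψ := by
        show (NormedSpace.exp (t • B)).mulVec φ = _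
        rw [hexp t, Matrix.add_mulVec, Matrix.smul_mulVec, Matrix.smul_mulVec,
          Matrix.one_mulVec]
      show ((v t 0 : ℂ) + v t 1 * Complex.I) = _
      rw [hvt]
      simp only [Pi.add_apply, Pi.smul_apply, smul_eq_mul, hzφ, hzψ]
      push_cast
      ring
    set A : ℂ := (zφ - Complex.I * zψ / (β:ℂ)) / 2 with hA
    set C : ℂ := (zφ + Complex.I * zψ / (β:ℂ)) / 2 with hC
    have hE : ∀ t : ℝ, Complex.exp ((β:ℂ) * t * Complex.I)
        = (Real.cos (β*t) : ℂ) + (Real.sin (β*t) : ℂ) * Complex.I := by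
      intro t
      rw [show (β:ℂ) * t = ((β*t : ℝ) : ℂ) by push_cast; ring, Complex.exp_mul_I,
        ← Complex.ofReal_cos, ← Complex.ofReal_sin]
    have hE' : ∀ t : ℝ, Complex.exp ((((-β):ℝ):ℂ) * t * Complex.I)
        = (Real.cos (β*t) : ℂ) - (Real.sin (β*t) : ℂ) * Complex.I := by
      intro t
      rw [show (((-β):ℝ):ℂ) * t = ((-(β*t) : ℝ) : ℂ) by push_cast; ring, Complex.exp_mul_I,
        ← Complex.ofReal_cos, ← Complex.ofReal_sin, Real.cos_neg, Real.sin_neg]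
      push_cast; ring
    have hAC : ∀ t : ℝ, z t = A * Complex.exp ((β:ℂ) * t * Complex.I)
        + C * Complex.exp ((((-β):ℝ):ℂ) * t * Complex.I) := by
      intro t
      rw [hzt t, hE t, hE' t, hA, hC]
      have h2 : ((Real.sin (β*t)/β : ℝ) : ℂ) = (Real.sin (β*t) : ℂ) / (β : ℂ) := by
        push_cast; ring
      rw [h2]
      linear_combination ((Real.sin (β*t) : ℂ) * zψ / (β:ℂ)) * Complex.I_sq
    have hACsum : A + C = zφ := by rw [hA, hC]; ring
    rcases lt_trichotomy (‖C‖) (‖A‖) with hlt | heq' | hlt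
    · -- |C| < |A| : rotation number β
      have hAne : A ≠ 0 := by
        intro h0
        rw [h0, norm_zero] at hlt
        exact (norm_nonneg C).not_gt hlt
      refine ⟨β, ?_, rfl⟩
      set h : ℝ → ℂ := fun t => 1 + (C/A) * Complex.exp ((((-2*β):ℝ):ℂ) * t * Complex.I)
        with hh_def
      have hfac : ∀ t : ℝ, A * Complex.exp ((β:ℂ) * t * Complex.I) * h t = z t := by
        intro t
        have hmul : Complex.exp ((β:ℂ) * t * Complex.I)
            * Complex.exp ((((-2*β):ℝ):ℂ) * t * Complex.I)
            = Complex.exp ((((-β):ℝ):ℂ) * t * Complex.I) := by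
          rw [← Complex.exp_add]; congr 1; push_cast; ring
        have hca : A * (C/A) = C := by field_simp
        rw [hAC t, hh_def]
        calc A * Complex.exp ((β:ℂ) * t * Complex.I)
              * (1 + (C/A) * Complex.exp ((((-2*β):ℝ):ℂ) * t * Complex.I))
            = A * Complex.exp ((β:ℂ) * t * Complex.I)
              + (A * (C/A)) * (Complex.exp ((β:ℂ) * t * Complex.I)
                * Complex.exp ((((-2*β):ℝ):ℂ) * t * Complex.I)) := by ring
          _ = _ := by rw [hca, hmul]
      have hcont : ContinuousOn h (Ici 0) := by
        apply Continuous.continuousOn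
        exact continuous_const.add (continuous_const.mul
          (((continuous_const.mul Complex.continuous_ofReal).mul continuous_const).cexp))
      have hre : ∀ t ∈ Ici (0:ℝ), 0 < (h t).re := by
        intro t ht
        have habs2 : ‖(C/A) * Complex.exp ((((-2*β):ℝ):ℂ) * t * Complex.I)‖
            = ‖C‖ / ‖A‖ := by
          rw [norm_mul, norm_div,
            show ((((-2*β):ℝ):ℂ) * t) = ((((-2*β))*t : ℝ):ℂ) by push_cast; ring,
            Complex.norm_exp_ofReal_mul_I, mul_one]
        have hlt1 : ‖(C/A) * Complex.exp ((((-2*β):ℝ):ℂ) * t * Complex.I)‖ < 1 := by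
          rw [habs2, div_lt_one (norm_pos_iff.mpr hAne)]; exact hlt
        have h4 := Complex.abs_re_le_norm ((C/A) * Complex.exp ((((-2*β):ℝ):ℂ) * t * Complex.I))
        have h5 : (h t).re = 1 + ((C/A) * Complex.exp ((((-2*β):ℝ):ℂ) * t * Complex.I)).re := by
          simp [hh_def]
        rw [h5]
        have := neg_abs_le ((C/A) * Complex.exp ((((-2*β):ℝ):ℂ) * t * Complex.I)).re
        linarith
      apply key (T := 0) (ω := β) hAne hcont hre hθcont
      intro t ht
      have h2 := hθz t ht
      rw [← hfac t] at h2
      exact h2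
    · -- |C| = |A| : impossible
      exfalso
      have hAne : A ≠ 0 := by
        intro h0
        rw [h0, norm_zero, norm_eq_zero] at heq'
        exact hzφne (by rw [← hACsum, h0, heq', add_zero])
      set ψa := Complex.arg (-C/A) with hψa
      have habs1 : ‖-C/A‖ = 1 := by
        rw [norm_div, norm_neg, heq', div_self (norm_ne_zero_iff.mpr hAne)]
      have hexp1 : Complex.exp ((ψa:ℂ) * Complex.I) = -C/A := by
        have h6 := Complex.norm_mul_exp_arg_mul_I (-C/A)
        rwa [habs1, Complex.ofReal_one, one_mul] at h6
      set t₀ := if 0 < β then (ψa + 2*π)/(2*β) else (ψa - 2*π)/(2*β) with ht₀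
      have hkey : 2*β*t₀ = ψa + 2*π ∨ 2*β*t₀ = ψa - 2*π := by
        rw [ht₀]; split_ifs with hsign
        · left; field_simp
        · right; field_simp
      have hEE : Complex.exp ((β:ℂ)*t₀*Complex.I)
          = (-C/A) * Complex.exp ((((-β):ℝ):ℂ)*t₀*Complex.I) := by
        rw [← hexp1, ← Complex.exp_add, Complex.exp_eq_exp_iff_exists_int]
        rcases hkey with hk | hk
        · refine ⟨1, ?_⟩
          have hkC := congrArg (fun x : ℝ => (x:ℂ)) hk
          push_cast at hkC ⊢
          linear_combination hkC * Complex.I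
        · refine ⟨-1, ?_⟩
          have hkC := congrArg (fun x : ℝ => (x:ℂ)) hk
          push_cast at hkC ⊢
          linear_combination hkC * Complex.I
      apply hzne t₀
      rw [hAC t₀, hEE]
      field_simp
      ring
    · -- |A| < |C| : rotation number -β
      have hCne : C ≠ 0 := by
        intro h0
        rw [h0, norm_zero] at hlt
        exact (norm_nonneg A).not_gt hlt
      refine ⟨-β, ?_, abs_neg β⟩
      set h : ℝ → ℂ := fun t => 1 + (A/C) * Complex.exp ((((2*β):ℝ):ℂ) * t * Complex.I)
        with hh_def
      have hfac : ∀ t : ℝ, C * Complex.exp ((((-β):ℝ):ℂ) * t * Complex.I) * h t = z t := by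
        intro t
        have hmul : Complex.exp ((((-β):ℝ):ℂ) * t * Complex.I)
            * Complex.exp ((((2*β):ℝ):ℂ) * t * Complex.I)
            = Complex.exp ((β:ℂ) * t * Complex.I) := by
          rw [← Complex.exp_add]; congr 1; push_cast; ring
        have hca : C * (A/C) = A := by field_simp
        rw [hAC t, hh_def]
        calc C * Complex.exp ((((-β):ℝ):ℂ) * t * Complex.I)
              * (1 + (A/C) * Complex.exp ((((2*β):ℝ):ℂ) * t * Complex.I))
            = C * Complex.exp ((((-β):ℝ):ℂ) * t * Complex.I)
              + (C * (A/C)) * (Complex.exp ((((-β):ℝ):ℂ) * t * Complex.I)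
                * Complex.exp ((((2*β):ℝ):ℂ) * t * Complex.I)) := by ring
          _ = _ := by rw [hca, hmul]; ring
      have hcont : ContinuousOn h (Ici 0) := by
        apply Continuous.continuousOn
        exact continuous_const.add (continuous_const.mul
          (((continuous_const.mul Complex.continuous_ofReal).mul continuous_const).cexp))
      have hre : ∀ t ∈ Ici (0:ℝ), 0 < (h t).re := by
        intro t ht
        have habs2 : ‖(A/C) * Complex.exp ((((2*β):ℝ):ℂ) * t * Complex.I)‖
            = ‖A‖ / ‖C‖ := by
          rw [norm_mul, norm_div,
            show ((((2*β):ℝ):ℂ) * t) = ((((2*β))*t : ℝ):ℂ) by push_cast; ring,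
            Complex.norm_exp_ofReal_mul_I, mul_one]
        have hlt1 : ‖(A/C) * Complex.exp ((((2*β):ℝ):ℂ) * t * Complex.I)‖ < 1 := by
          rw [habs2, div_lt_one (norm_pos_iff.mpr hCne)]; exact hlt
        have h4 := Complex.abs_re_le_norm ((A/C) * Complex.exp ((((2*β):ℝ):ℂ) * t * Complex.I))
        have h5 : (h t).re = 1 + ((A/C) * Complex.exp ((((2*β):ℝ):ℂ) * t * Complex.I)).re := by
          simp [hh_def]
        rw [h5]
        have := neg_abs_le ((A/C) * Complex.exp ((((2*β):ℝ):ℂ) * t * Complex.I)).re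
        linarith
      apply key (T := 0) (ω := -β) hCne hcont hre hθcont
      intro t ht
      have h2 := hθz t ht
      rw [← hfac t] at h2
      exact h2
end
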